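/- Let ℓ ≥ 3 be odd, ξ = exp(2πi/ℓ). Fix ν ∈ ℂ² and integers i = (i₁,i₂), j = (j₁,j₂), s = (s₁,s₂), t = (t₁,t₂) in {0,…,ℓ−1}². Define R(s) = ξ^{−4(ν₂+s₂)(i₂−j₂) − 2((ν₂+s₂)(i₁−j₁) + (ν₁+s₁)(i₂−j₂))}. If (i₁,i₂) ≢ (j₁,j₂) mod ℓ, then there exist s, t ∈ {0,…,ℓ−1}² with R(s) ≠ R(t). -/

import Mathlib

/-- `ξ^x := exp(2πix/ℓ)` -/
noncomputable def qexp (ℓ : ℕ) (x : ℂ) : ℂ :=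
  Complex.exp (2 * Real.pi * Complex.I * x / ℓ)

lemma qexp_ne_of (ℓ : ℕ) (hℓ : 0 < ℓ) (a b : ℂ) (m : ℤ) (hab : a - b = (m : ℂ))
    (hm : (m : ZMod ℓ) ≠ 0) : qexp ℓ a ≠ qexp ℓ b := by
  intro h
  rw [qexp, qexp, Complex.exp_eq_exp_iff_exists_int] at h
  obtain ⟨n, hn⟩ := h
  have hℓ0 : (ℓ : ℂ) ≠ 0 := Nat.cast_ne_zero.mpr hℓ.ne'
  have hπ : (Real.pi : ℂ) ≠ 0 := Complex.ofReal_ne_zero.mpr Real.pi_ne_zero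
  have hne : (2 * Real.pi * Complex.I : ℂ) ≠ 0 := by
    simp [hπ, Complex.I_ne_zero]
  have h2 : (a - b) * (2 * Real.pi * Complex.I) = ((n : ℂ) * ℓ) * (2 * Real.pi * Complex.I) := by
    field_simp at hn
    linear_combination (2 * Real.pi * Complex.I) * hn
  have h3 : a - b = (n : ℂ) * ℓ := mul_right_cancel₀ hne h2
  have key : (m : ℂ) = ((n * ℓ : ℤ) : ℂ) := by
    rw [← hab, h3]; push_cast; ring
  have hmn : m = n * ℓ := by exact_mod_cast key
  apply hm
  rw [hmn]
  push_cast
  simp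

theorem stmt13 (ℓ : ℕ) (h3 : 3 ≤ ℓ) (hodd : Odd ℓ) (ν₁ ν₂ : ℂ)
    (i₁ i₂ j₁ j₂ : ℤ)
    (hi₁ : 0 ≤ i₁ ∧ i₁ ≤ (ℓ : ℤ) - 1) (hi₂ : 0 ≤ i₂ ∧ i₂ ≤ (ℓ : ℤ) - 1)
    (hj₁ : 0 ≤ j₁ ∧ j₁ ≤ (ℓ : ℤ) - 1) (hj₂ : 0 ≤ j₂ ∧ j₂ ≤ (ℓ : ℤ) - 1)
    (hij : ¬((i₁ : ZMod ℓ) = (j₁ : ZMod ℓ) ∧ (i₂ : ZMod ℓ) = (j₂ : ZMod ℓ))) :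
    ∃ s₁ s₂ t₁ t₂ : ℕ, s₁ < ℓ ∧ s₂ < ℓ ∧ t₁ < ℓ ∧ t₂ < ℓ ∧
      qexp ℓ (-4 * (ν₂ + s₂) * ((i₂ : ℂ) - j₂)
          - 2 * ((ν₂ + s₂) * ((i₁ : ℂ) - j₁) + (ν₁ + s₁) * ((i₂ : ℂ) - j₂)))
        ≠ qexp ℓ (-4 * (ν₂ + t₂) * ((i₂ : ℂ) - j₂)
          - 2 * ((ν₂ + t₂) * ((i₁ : ℂ) - j₁) + (ν₁ + t₁) * ((i₂ : ℂ) - j₂))) := by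
  have hℓ : 0 < ℓ := by omega
  have h2u : IsUnit (2 : ZMod ℓ) := by
    have : ((2 : ℕ) : ZMod ℓ) = (2 : ZMod ℓ) := by push_cast; ring
    rw [← this, ZMod.isUnit_iff_coprime]
    exact Nat.coprime_two_left.mpr hodd
  by_cases hc : (i₂ : ZMod ℓ) = (j₂ : ZMod ℓ)
  · -- then i₂ = j₂ as integers
    have hd : (ℓ : ℤ) ∣ (i₂ - j₂) := by
      rwa [← ZMod.intCast_zmod_eq_zero_iff_dvd, Int.cast_sub, sub_eq_zero]
    have heq : i₂ = j₂ := by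
      have h1 := hi₂.1; have h2' := hi₂.2; have h3' := hj₂.1; have h4 := hj₂.2
      have : i₂ - j₂ = 0 :=
        Int.eq_zero_of_dvd_of_natAbs_lt_natAbs hd (by omega)
      omega
    have hij1 : (i₁ : ZMod ℓ) ≠ (j₁ : ZMod ℓ) := fun h => hij ⟨h, hc⟩
    refine ⟨0, 1, 0, 0, by omega, by omega, by omega, by omega, ?_⟩
    apply qexp_ne_of ℓ hℓ _ _ (-2 * (i₁ - j₁))
    · have : (i₂ : ℂ) = (j₂ : ℂ) := by exact_mod_cast congrArg (fun z : ℤ => (z : ℂ)) heq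
      push_cast
      rw [this]
      ring
    · intro h
      push_cast at h
      have h2 : (2 : ZMod ℓ) * ((i₁ : ZMod ℓ) - (j₁ : ZMod ℓ)) = 0 := by
        linear_combination -h
      have := h2u.mul_right_eq_zero.mp h2
      exact hij1 (by linear_combination this)
  · refine ⟨1, 0, 0, 0, by omega, by omega, by omega, by omega, ?_⟩
    apply qexp_ne_of ℓ hℓ _ _ (-2 * (i₂ - j₂))
    · push_cast; ring
    · intro h
      push_cast at h
      have h2 : (2 : ZMod ℓ) * ((i₂ : ZMod ℓ) - (j₂ : ZMod ℓ)) = 0 := by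
        linear_combination -h
      have := h2u.mul_right_eq_zero.mp h2
      exact hc (by linear_combination this)
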